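/- The n-th derivative at zero of the Gaussian g(θ) = exp(-θ²/(2σ²)) equals (-1)^{n/2} (n!/n!!) σ^{-n} for even n, and 0 for odd n. -/

import Mathlib

open Polynomial

lemma fact_eq_dfact_mul (n : ℕ) : n.factorial = n.doubleFactorial * (n-1).doubleFactorial := by
  cases n with
  | zero => rfl
  | succ m => simpa [mul_comm] using Nat.factorial_eq_mul_doubleFactorial m

/-- The `n`-th derivative at `0` of the Gaussian `exp (-θ²/(2σ²))` equals
`(-1)^{n/2} (n!/n!!) σ^{-n}` for even `n`, and `0` for odd `n`. -/
theorem stmt3 (σ : ℝ) (hσ : 0 < σ) (n : ℕ) :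
    iteratedDeriv n (fun θ : ℝ => Real.exp (-θ ^ 2 / (2 * σ ^ 2))) 0 =
      if Even n then
        (-1) ^ (n / 2) * ((n.factorial : ℝ) / (n.doubleFactorial : ℝ)) / σ ^ n
      else 0 := by
  have hσ0 : σ ≠ 0 := ne_of_gt hσ
  have hf : ContDiff ℝ n (fun y : ℝ => Real.exp (-(y ^ 2 / 2))) := by
    apply Real.contDiff_exp.comp
    exact (contDiff_id.pow 2 |>.div_const 2).neg
  have hcomp : (fun θ : ℝ => Real.exp (-θ ^ 2 / (2 * σ ^ 2))) =
      (fun θ : ℝ => (fun y : ℝ => Real.exp (-(y ^ 2 / 2))) (σ⁻¹ * θ)) := by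
    funext θ
    congr 1
    field_simp
  rw [hcomp, iteratedDeriv_comp_const_mul hf]
  simp only [mul_zero]
  rw [iteratedDeriv_eq_iterate,
    Polynomial.deriv_gaussian_eq_hermite_mul_gaussian]
  have haev : (aeval (0:ℝ) (hermite n)) = ((hermite n).coeff 0 : ℤ) := by
    rw [show ((0:ℝ)) = algebraMap ℤ ℝ 0 by simp, aeval_algebraMap_apply]
    simp [Polynomial.coeff_zero_eq_eval_zero]
  rw [haev, coeff_hermite]
  simp only [add_zero, Nat.sub_zero]
  split_ifs with h
  · obtain ⟨m, hm⟩ := h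
    subst hm
    have hfd : ((m+m).factorial : ℝ) = ((m+m).doubleFactorial : ℝ) * ((m+m-1).doubleFactorial : ℝ) := by
      exact_mod_cast congrArg (Nat.cast : ℕ → ℝ) (fact_eq_dfact_mul (m+m))
    have hd0 : ((m+m).doubleFactorial : ℝ) ≠ 0 := by
      exact_mod_cast (Nat.doubleFactorial_pos _).ne'
    push_cast
    rw [hfd]
    have hme : (m + m) / 2 = m := by omega
    rw [hme]
    have : (-1 : ℝ) ^ (m + m) = 1 := by
      rw [← two_mul]; simp [pow_mul]
    rw [this]
    field_simp
    simp [hσ0]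
  · simp
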